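/- Let F be a finite field and let W₁, W₂, W₃, A, B, C be independent uniformly distributed random variables on F. Define X₂ = W₂ - A + C and X₃ = W₃ - B - C. Then the conditional mutual information I(X₂, X₃ ; W₂, W₃ | W₂ + W₃, W₁, A, B) = 0. -/

import Mathlib

open Finset

/-- Probability of `X = a` under the uniform distribution on the finite sample space `Ω`. -/
noncomputable def pr {Ω α : Type*} [Fintype Ω] [DecidableEq α] (X : Ω → α) (a : α) : ℝ :=
  ((Finset.univ.filter fun ω => X ω = a).card : ℝ) / (Fintype.card Ω : ℝ)

/-- Shannon entropy (natural base) of `X` under the uniform distribution on `Ω`. -/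
noncomputable def ent {Ω α : Type*} [Fintype Ω] [Fintype α] [DecidableEq α] (X : Ω → α) : ℝ :=
  -∑ a : α, pr X a * Real.log (pr X a)

/-- Conditional entropy `H(X | Y)`. -/
noncomputable def condEnt {Ω α β : Type*} [Fintype Ω] [Fintype α] [Fintype β]
    [DecidableEq α] [DecidableEq β] (X : Ω → α) (Y : Ω → β) : ℝ :=
  ent (fun ω => (X ω, Y ω)) - ent Y

/-- Mutual information `I(X ; Y)`. -/
noncomputable def mi {Ω α β : Type*} [Fintype Ω] [Fintype α] [Fintype β]
    [DecidableEq α] [DecidableEq β] (X : Ω → α) (Y : Ω → β) : ℝ :=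
  ent X + ent Y - ent (fun ω => (X ω, Y ω))

/-- Conditional mutual information `I(X ; Y | Z)`. -/
noncomputable def cmi {Ω α β γ : Type*} [Fintype Ω] [Fintype α] [Fintype β] [Fintype γ]
    [DecidableEq α] [DecidableEq β] [DecidableEq γ]
    (X : Ω → α) (Y : Ω → β) (Z : Ω → γ) : ℝ :=
  ent (fun ω => (X ω, Z ω)) + ent (fun ω => (Y ω, Z ω))
    - ent (fun ω => (X ω, Y ω, Z ω)) - ent Z

/-- Security at user 1 in the 3-user DSA scheme: with `W₁,W₂,W₃,A,B,C` i.i.d. uniform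
on the finite field `F` (modeled by the uniform distribution on `F⁶`), the messages
`X₂ = W₂ - A + C` and `X₃ = W₃ - B - C` satisfy
`I(X₂,X₃ ; W₂,W₃ | W₂+W₃, W₁, A, B) = 0`. -/
lemma pr_comp_equiv {Ω Ω' α : Type*} [Fintype Ω] [Fintype Ω'] [DecidableEq α]
    (e : Ω' ≃ Ω) (X : Ω → α) (a : α) : pr (fun ω => X (e ω)) a = pr X a := by
  unfold pr
  rw [Fintype.card_congr e]
  congr 2
  apply Finset.card_bij (fun ω _ => e ω)
  · intro ω hω; simp_all
  · intro ω₁ _ ω₂ _ h; exact e.injective h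
  · intro ω hω; exact ⟨e.symm ω, by simp_all, by simp⟩

lemma ent_comp_equiv {Ω Ω' α : Type*} [Fintype Ω] [Fintype Ω'] [Fintype α] [DecidableEq α]
    (e : Ω' ≃ Ω) (X : Ω → α) : ent (fun ω => X (e ω)) = ent X := by
  unfold ent
  congr 1
  exact Finset.sum_congr rfl fun a _ => by rw [pr_comp_equiv]

lemma pr_comp_inj {Ω α β : Type*} [Fintype Ω] [DecidableEq α] [DecidableEq β]
    (g : α → β) (hg : Function.Injective g) (X : Ω → α) (a : α) :
    pr (fun ω => g (X ω)) (g a) = pr X a := by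
  unfold pr
  congr 3
  apply Finset.filter_congr
  intro ω _
  simp [hg.eq_iff]

lemma pr_comp_notin {Ω α β : Type*} [Fintype Ω] [DecidableEq β]
    (g : α → β) (X : Ω → α) (b : β) (hb : b ∉ Set.range g) :
    pr (fun ω => g (X ω)) b = 0 := by
  unfold pr
  convert zero_div _
  norm_cast
  rw [Finset.card_eq_zero, Finset.filter_eq_empty_iff]
  intro ω _ h
  exact hb ⟨X ω, h⟩

lemma ent_comp_inj {Ω α β : Type*} [Fintype Ω] [Fintype α] [Fintype β]
    [DecidableEq α] [DecidableEq β]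
    (g : α → β) (hg : Function.Injective g) (X : Ω → α) :
    ent (fun ω => g (X ω)) = ent X := by
  unfold ent
  congr 1
  rw [← Finset.sum_subset (Finset.subset_univ (Finset.univ.image g))
      (fun b _ hb => by rw [pr_comp_notin g X b (by simpa using hb)]; simp),
    Finset.sum_image (fun x _ y _ h => hg h)]
  exact Finset.sum_congr rfl fun a _ => by rw [pr_comp_inj g hg]

lemma ent_fst {α β : Type*} [Fintype α] [Fintype β] [DecidableEq α] [Nonempty α] [Nonempty β] :
    ent (fun p : α × β => p.1) = Real.log (Fintype.card α) := by
  have hpr : ∀ a : α, pr (fun p : α × β => p.1) a = 1 / (Fintype.card α : ℝ) := by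
    intro a
    unfold pr
    have : (Finset.univ.filter fun p : α × β => p.1 = a) = {a} ×ˢ Finset.univ := by
      ext p; simp [Finset.mem_product, Prod.ext_iff, eq_comm]
    rw [this, Finset.card_product, Finset.card_singleton, Finset.card_univ, Fintype.card_prod]
    push_cast
    rw [one_mul]
    have hb : (0:ℝ) < Fintype.card β := by positivity
    have ha : (0:ℝ) < Fintype.card α := by positivity
    field_simp
  unfold ent
  have hc : (0:ℝ) < Fintype.card α := by positivity
  simp only [hpr]
  rw [Finset.sum_const, Finset.card_univ]
  rw [Real.log_div one_ne_zero (ne_of_gt hc), Real.log_one]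
  rw [nsmul_eq_mul]
  field_simp
  ring

lemma ent_eq_log {Ω α β γ : Type*} [Fintype Ω] [Fintype α] [Fintype β] [Fintype γ]
    [DecidableEq α] [DecidableEq β] [Nonempty β] [Nonempty γ]
    (e : Ω ≃ β × γ) (g : β → α) (hg : Function.Injective g)
    (T : Ω → α) (hT : ∀ ω, T ω = g (e ω).1) :
    ent T = Real.log (Fintype.card β) := by
  have h1 : ent T = ent (fun p : β × γ => g p.1) := by
    have : T = fun ω => (fun p : β × γ => g p.1) (e ω) := funext hT
    rw [this]
    exact ent_comp_equiv e fun p => g p.1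
  rw [h1, ent_comp_inj g hg (fun p : β × γ => p.1), ent_fst]

theorem stmt5 (F : Type) [Field F] [Fintype F] [DecidableEq F] :
    cmi (Ω := F × F × F × F × F × F)
      (fun ω => (ω.2.1 - ω.2.2.2.1 + ω.2.2.2.2.2, ω.2.2.1 - ω.2.2.2.2.1 - ω.2.2.2.2.2))
      (fun ω => (ω.2.1, ω.2.2.1))
      (fun ω => (ω.2.1 + ω.2.2.1, ω.1, ω.2.2.2.1, ω.2.2.2.2.1)) = 0 := by
  unfold cmi
  beta_reduce
  set L : ℝ := Real.log (Fintype.card F) with hL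
  -- Z term
  have hZ : ent (fun ω : F × F × F × F × F × F =>
      (ω.2.1 + ω.2.2.1, ω.1, ω.2.2.2.1, ω.2.2.2.2.1)) = 4 * L := by
    have := ent_eq_log (Ω := F × F × F × F × F × F)
      (e := ⟨fun ω => ((ω.2.1 + ω.2.2.1, ω.1, ω.2.2.2.1, ω.2.2.2.2.1), (ω.2.2.1, ω.2.2.2.2.2)),
             fun p => (p.1.2.1, p.1.1 - p.2.1, p.2.1, p.1.2.2.1, p.1.2.2.2, p.2.2),
             by rintro ⟨w1,w2,w3,a,b,c⟩; simp only [Prod.mk.injEq, and_true, true_and]; and_intros <;> ring,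
             by rintro ⟨⟨s,w1,a,b⟩,⟨w3,c⟩⟩; simp only [Prod.mk.injEq, and_true, true_and]; and_intros <;> ring⟩)
      (g := id) (hg := fun x y h => h)
      (T := fun ω => (ω.2.1 + ω.2.2.1, ω.1, ω.2.2.2.1, ω.2.2.2.2.1))
      (hT := fun ω => rfl)
    rw [this]
    have : (Fintype.card (F × F × F × F) : ℝ) = (Fintype.card F : ℝ) ^ 4 := by
      simp [Fintype.card_prod]; ring
    rw [this, Real.log_pow]
    push_cast; ring
  -- (Y,Z) term
  have hYZ : ent (fun ω : F × F × F × F × F × F =>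
      ((ω.2.1, ω.2.2.1), (ω.2.1 + ω.2.2.1, ω.1, ω.2.2.2.1, ω.2.2.2.2.1))) = 5 * L := by
    have := ent_eq_log (Ω := F × F × F × F × F × F)
      (e := ⟨fun ω => ((ω.2.1, ω.2.2.1, ω.1, ω.2.2.2.1, ω.2.2.2.2.1), ω.2.2.2.2.2),
             fun p => (p.1.2.2.1, p.1.1, p.1.2.1, p.1.2.2.2.1, p.1.2.2.2.2, p.2),
             by rintro ⟨w1,w2,w3,a,b,c⟩; rfl,
             by rintro ⟨⟨w2,w3,w1,a,b⟩,c⟩; rfl⟩)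
      (g := fun p : F × F × F × F × F =>
        ((p.1, p.2.1), (p.1 + p.2.1, p.2.2.1, p.2.2.2.1, p.2.2.2.2)))
      (hg := by
        rintro ⟨w2,w3,w1,a,b⟩ ⟨w2',w3',w1',a',b'⟩ h
        simp only [Prod.mk.injEq] at h
        obtain ⟨⟨h1,h2⟩,h3,h4,h5,h6⟩ := h
        simp only [Prod.mk.injEq]
        exact ⟨h1, h2, h4, h5, h6⟩)
      (T := fun ω => ((ω.2.1, ω.2.2.1), (ω.2.1 + ω.2.2.1, ω.1, ω.2.2.2.1, ω.2.2.2.2.1)))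
      (hT := fun ω => rfl)
    rw [this]
    have : (Fintype.card (F × F × F × F × F) : ℝ) = (Fintype.card F : ℝ) ^ 5 := by
      simp [Fintype.card_prod]; ring
    rw [this, Real.log_pow]
    push_cast; ring
  -- (X,Z) term
  have hXZ : ent (fun ω : F × F × F × F × F × F =>
      ((ω.2.1 - ω.2.2.2.1 + ω.2.2.2.2.2, ω.2.2.1 - ω.2.2.2.2.1 - ω.2.2.2.2.2),
       (ω.2.1 + ω.2.2.1, ω.1, ω.2.2.2.1, ω.2.2.2.2.1))) = 5 * L := by
    have := ent_eq_log (Ω := F × F × F × F × F × F)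
      (e := ⟨fun ω => ((ω.2.1 - ω.2.2.2.1 + ω.2.2.2.2.2, ω.2.1 + ω.2.2.1, ω.1,
                        ω.2.2.2.1, ω.2.2.2.2.1), ω.2.2.1),
             fun p => (p.1.2.2.1, p.1.2.1 - p.2, p.2, p.1.2.2.2.1, p.1.2.2.2.2,
                       p.1.1 - (p.1.2.1 - p.2) + p.1.2.2.2.1),
             by rintro ⟨w1,w2,w3,a,b,c⟩; simp only [Prod.mk.injEq, and_true, true_and]; and_intros <;> ring,
             by rintro ⟨⟨u,s,w1,a,b⟩,t⟩; simp only [Prod.mk.injEq, and_true, true_and]; and_intros <;> ring⟩)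
      (g := fun p : F × F × F × F × F =>
        ((p.1, p.2.1 - p.2.2.2.1 - p.2.2.2.2 - p.1), (p.2.1, p.2.2.1, p.2.2.2.1, p.2.2.2.2)))
      (hg := by
        rintro ⟨u,s,w1,a,b⟩ ⟨u',s',w1',a',b'⟩ h
        simp only [Prod.mk.injEq] at h
        obtain ⟨⟨h1,h2⟩,h3,h4,h5,h6⟩ := h
        simp only [Prod.mk.injEq]
        exact ⟨h1, h3, h4, h5, h6⟩)
      (T := fun ω => ((ω.2.1 - ω.2.2.2.1 + ω.2.2.2.2.2, ω.2.2.1 - ω.2.2.2.2.1 - ω.2.2.2.2.2),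
                      (ω.2.1 + ω.2.2.1, ω.1, ω.2.2.2.1, ω.2.2.2.2.1)))
      (hT := by
        rintro ⟨w1,w2,w3,a,b,c⟩
        simp only [Equiv.coe_fn_mk, Prod.mk.injEq, and_true, true_and]
        and_intros <;> ring)
    rw [this]
    have : (Fintype.card (F × F × F × F × F) : ℝ) = (Fintype.card F : ℝ) ^ 5 := by
      simp [Fintype.card_prod]; ring
    rw [this, Real.log_pow]
    push_cast; ring
  -- (X,Y,Z) term
  have hXYZ : ent (fun ω : F × F × F × F × F × F =>
      ((ω.2.1 - ω.2.2.2.1 + ω.2.2.2.2.2, ω.2.2.1 - ω.2.2.2.2.1 - ω.2.2.2.2.2),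
       (ω.2.1, ω.2.2.1),
       (ω.2.1 + ω.2.2.1, ω.1, ω.2.2.2.1, ω.2.2.2.2.1))) = 6 * L := by
    have := ent_eq_log (Ω := F × F × F × F × F × F) (γ := Unit)
      (e := (Equiv.prodPUnit (F × F × F × F × F × F)).symm)
      (g := fun ω : F × F × F × F × F × F =>
        ((ω.2.1 - ω.2.2.2.1 + ω.2.2.2.2.2, ω.2.2.1 - ω.2.2.2.2.1 - ω.2.2.2.2.2),
         (ω.2.1, ω.2.2.1),
         (ω.2.1 + ω.2.2.1, ω.1, ω.2.2.2.1, ω.2.2.2.2.1)))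
      (hg := by
        rintro ⟨w1,w2,w3,a,b,c⟩ ⟨w1',w2',w3',a',b',c'⟩ h
        simp only [Prod.mk.injEq] at h
        obtain ⟨⟨h1,h2⟩,⟨h3,h4⟩,h5,h6,h7,h8⟩ := h
        simp only [Prod.mk.injEq]
        refine ⟨h6, h3, h4, h7, h8, ?_⟩
        linear_combination h1 - h3 + h7)
      (T := fun ω => ((ω.2.1 - ω.2.2.2.1 + ω.2.2.2.2.2, ω.2.2.1 - ω.2.2.2.2.1 - ω.2.2.2.2.2),
                      (ω.2.1, ω.2.2.1),
                      (ω.2.1 + ω.2.2.1, ω.1, ω.2.2.2.1, ω.2.2.2.2.1)))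
      (hT := fun ω => rfl)
    rw [this]
    have : (Fintype.card (F × F × F × F × F × F) : ℝ) = (Fintype.card F : ℝ) ^ 6 := by
      simp [Fintype.card_prod]; ring
    rw [this, Real.log_pow]
    push_cast; ring
  rw [hZ, hYZ, hXZ, hXYZ]
  ring
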